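/- Let u(x) = ∑_{k ∈ F} c_k e^{2πi k·x} be a trigonometric polynomial with finite F ⊂ ℤ^d, and let ψ_1,…,ψ_p : ℤ^d → ℂ be arbitrary functions (multiplier symbols evaluated at frequencies). For each i define (A_i u)(x) = ∑_{k ∈ F} c_k ψ_i(k) e^{2πi k·x} and set u_n^i(x) = (A_i u)(nx). Then for every continuous compactly supported φ, lim_{n→∞} ∫ φ(x) ∏_{i=1}^p u_n^i(x) dx = ( ∑_{k_1,…,k_p ∈ F, k_1+⋯+k_p=0} ∏_{i=1}^p c_{k_i} ψ_i(k_i) ) · ∫ φ(x) dx. -/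

import Mathlib

open MeasureTheory Filter

noncomputable def expc {d : ℕ} (k : Fin d → ℤ) (x : Fin d → ℝ) : ℂ :=
  Complex.exp (2 * Real.pi * Complex.I * (∑ i, (k i : ℝ) * x i))

lemma expc_continuous {d : ℕ} (k : Fin d → ℤ) : Continuous (expc k) := by
  unfold expc
  fun_prop

lemma expc_sum {d p : ℕ} (k : Fin p → Fin d → ℤ) (y : Fin d → ℝ) :
    expc (∑ i, k i) y = ∏ i, expc (k i) y := by
  unfold expc
  rw [← Complex.exp_sum]
  congr 1
  rw [← Finset.mul_sum]
  congr 1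
  push_cast [Finset.sum_apply]
  simp_rw [Finset.sum_mul]
  rw [Finset.sum_comm]

lemma expc_smul_eq {d : ℕ} (K : Fin d → ℤ) (n : ℕ) (x : Fin d → ℝ) :
    expc K ((n : ℝ) • x) =
      Complex.exp (((2 * Real.pi * ((n : ℝ) * ∑ j, (K j : ℝ) * x j) : ℝ)) * Complex.I) := by
  unfold expc
  congr 1
  simp only [Pi.smul_apply, smul_eq_mul]
  push_cast
  simp only [Finset.mul_sum, Finset.sum_mul]
  exact Finset.sum_congr rfl fun j _ => by ring

lemma RL0 {d : ℕ} (φ : (Fin d → ℝ) → ℂ) (K : Fin d → ℤ) (hK : K ≠ 0) :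
    Tendsto (fun n : ℕ => ∫ x : Fin d → ℝ, φ x * expc K ((n : ℝ) • x)) atTop (nhds 0) := by
  classical
  set L : (Fin d → ℝ) →L[ℝ] ℝ := ∑ j, (K j : ℝ) • ContinuousLinearMap.proj j with hL
  have hLapp : ∀ x : Fin d → ℝ, L x = ∑ j, (K j : ℝ) * x j := by
    intro x
    simp [hL, ContinuousLinearMap.sum_apply]
  have hLne : L ≠ 0 := by
    obtain ⟨j, hj⟩ : ∃ j, K j ≠ 0 := by
      by_contra h
      push_neg at h
      exact hK (funext h)
    intro h
    have : L (Pi.single j 1) = 0 := by rw [h]; rfl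
    rw [hLapp] at this
    rw [Finset.sum_eq_single j] at this
    · rw [Pi.single_eq_same, mul_one] at this
      exact hj (Int.cast_injective (α := ℝ) (by simpa using this))
    · intro b _ hb; simp [Pi.single_apply, hb]
    · simp
  have hLnorm : 0 < ‖L‖ := norm_pos_iff.mpr hLne
  haveI : ProperSpace ((Fin d → ℝ) →L[ℝ] ℝ) := FiniteDimensional.proper ℝ _
  have hco : Tendsto (fun n : ℕ => (-(n : ℝ)) • L) atTop (cocompact ((Fin d → ℝ) →L[ℝ] ℝ)) := by
    rw [← Metric.cobounded_eq_cocompact, ← tendsto_norm_atTop_iff_cobounded]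
    have hnm : ∀ n : ℕ, ‖(-(n : ℝ)) • L‖ = (n : ℝ) * ‖L‖ := by
      intro n
      rw [norm_smul (-(n : ℝ)) L]
      simp
    simp_rw [hnm]
    exact (tendsto_natCast_atTop_atTop).atTop_mul_const hLnorm
  have h := (tendsto_integral_exp_smul_cocompact φ
      (volume : Measure (Fin d → ℝ))).comp hco
  have heq : (fun n : ℕ => ∫ x : Fin d → ℝ, φ x * expc K ((n : ℝ) • x))
      = (fun w : (Fin d → ℝ) →L[ℝ] ℝ => ∫ v, Real.fourierChar (-(w v)) • φ v) ∘
        (fun n : ℕ => (-(n : ℝ)) • L) := by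
    funext n
    refine integral_congr_ae (Eventually.of_forall fun x => ?_)
    simp only [Function.comp_apply, ContinuousLinearMap.smul_apply, smul_eq_mul, neg_mul,
      neg_neg, Circle.smul_def, Real.fourierChar_apply, hLapp]
    rw [mul_comm, expc_smul_eq]
  rw [heq]
  exact h

/-- Periodic version of the main theorem: for Fourier multipliers with symbols
`ψ_i` acting on a trigonometric polynomial `u`, the limit of the `p`-fold
product `∏_i (A_i u)(nx)` tested against `φ` picks out the resonant tuples of
frequencies summing to zero. -/
theorem trigPoly_multiplier_product_limit {d p : ℕ} (F : Finset (Fin d → ℤ))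
    (c : (Fin d → ℤ) → ℂ) (ψ : Fin p → (Fin d → ℤ) → ℂ)
    (φ : (Fin d → ℝ) → ℂ) (hφc : Continuous φ) (hφs : HasCompactSupport φ) :
    Tendsto
      (fun n : ℕ => ∫ x : Fin d → ℝ,
        φ x * ∏ i : Fin p, ∑ k ∈ F, c k * ψ i k * expc k ((n : ℝ) • x))
      atTop
      (nhds
        ((∑ k ∈ (Fintype.piFinset fun _ : Fin p => F).filter
            (fun k => ∑ i, k i = 0), ∏ i, c (k i) * ψ i (k i)) *
          ∫ x : Fin d → ℝ, φ x)) := by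
  classical
  have key : ∀ n : ℕ,
      (∫ x : Fin d → ℝ, φ x * ∏ i : Fin p, ∑ k ∈ F, c k * ψ i k * expc k ((n : ℝ) • x))
      = ∑ k ∈ Fintype.piFinset (fun _ : Fin p => F),
          (∏ i, c (k i) * ψ i (k i)) *
            ∫ x : Fin d → ℝ, φ x * expc (∑ i, k i) ((n : ℝ) • x) := by
    intro n
    have hrw : ∀ x : Fin d → ℝ,
        φ x * ∏ i : Fin p, ∑ k ∈ F, c k * ψ i k * expc k ((n : ℝ) • x)
        = ∑ k ∈ Fintype.piFinset (fun _ : Fin p => F),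
            (∏ i, c (k i) * ψ i (k i)) * (φ x * expc (∑ i, k i) ((n : ℝ) • x)) := by
      intro x
      rw [Finset.prod_univ_sum, Finset.mul_sum]
      refine Finset.sum_congr rfl fun k _ => ?_
      rw [expc_sum]
      rw [Finset.prod_mul_distrib]
      ring
    simp_rw [hrw]
    rw [integral_finset_sum]
    · refine Finset.sum_congr rfl fun k _ => ?_
      rw [integral_const_mul]
    · intro k _
      apply Continuous.integrable_of_hasCompactSupport
      · exact continuous_const.mul (hφc.mul
          ((expc_continuous _).comp (continuous_const_smul (n : ℝ))))
      · apply HasCompactSupport.mul_left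
        exact hφs.mul_right
  simp_rw [key]
  have hlim : Tendsto
      (fun n : ℕ => ∑ k ∈ Fintype.piFinset (fun _ : Fin p => F),
          (∏ i, c (k i) * ψ i (k i)) *
            ∫ x : Fin d → ℝ, φ x * expc (∑ i, k i) ((n : ℝ) • x))
      atTop
      (nhds (∑ k ∈ Fintype.piFinset (fun _ : Fin p => F),
          if (∑ i, k i) = 0 then (∏ i, c (k i) * ψ i (k i)) * ∫ x : Fin d → ℝ, φ x else 0)) := by
    apply tendsto_finset_sum
    intro k _
    by_cases hk : (∑ i, k i) = 0
    · rw [if_pos hk]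
      have : ∀ n : ℕ, (∏ i, c (k i) * ψ i (k i)) *
          (∫ x : Fin d → ℝ, φ x * expc (∑ i, k i) ((n : ℝ) • x))
          = (∏ i, c (k i) * ψ i (k i)) * ∫ x : Fin d → ℝ, φ x := by
        intro n
        congr 1
        refine integral_congr_ae (Eventually.of_forall fun x => ?_)
        rw [hk]
        unfold expc
        simp
      simp_rw [this]
      exact tendsto_const_nhds
    · rw [if_neg hk]
      have := (RL0 φ (∑ i, k i) hk).const_mul (∏ i, c (k i) * ψ i (k i))
      simpa using this
  convert hlim using 2
  rw [← Finset.sum_filter, Finset.sum_mul]
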